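/- (Abstract second-order convergence of the Crank–Nicolson scheme in the energy norm.) Let V be a real inner product space, and let a : V × V → ℝ be a symmetric positive semidefinite bilinear form. Let τ > 0, N ≥ 1, T = Nτ, tⁿ = nτ. Let u : [0,T] → V be three times continuously differentiable and ρ : [0,T] → V continuously differentiable (in the norm of V), and suppose η⁰, …, η^N ∈ V satisfy, for each n = 1, …, N and every v ∈ V, ⟪(ηⁿ - η^{n-1})/τ, v⟫ + a((ηⁿ + η^{n-1})/2, v) = -⟪(ρ(tⁿ) - ρ(t^{n-1}))/τ, v⟫ + ⟪(u(tⁿ) - u(t^{n-1}))/τ - (u'(tⁿ) + u'(t^{n-1}))/2, v⟫. Then a(η^N, η^N) ≤ a(η⁰, η⁰) + 2 ∫₀^T ‖ρ'(s)‖² ds + (τ⁴ / 60) ∫₀^T ‖u'''(s)‖² ds. -/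

import Mathlib

open Set intervalIntegral
open scoped RealInnerProductSpace

open MeasureTheory

section AuxLemmas

open Set intervalIntegral MeasureTheory
open scoped RealInnerProductSpace

/-- Cauchy–Schwarz for interval integrals of continuous functions. -/
lemma cs_integral {a b : ℝ} (hab : a ≤ b) {f g : ℝ → ℝ}
    (hf : ContinuousOn f (Icc a b)) (hg : ContinuousOn g (Icc a b)) :
    (∫ s in a..b, f s * g s) ^ 2 ≤ (∫ s in a..b, f s ^ 2) * ∫ s in a..b, g s ^ 2 := by
  have hI : uIcc a b = Icc a b := uIcc_of_le hab
  have hf2 : IntervalIntegrable (fun s => f s ^ 2) volume a b :=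
    ((hf.pow 2).mono hI.subset).intervalIntegrable
  have hg2 : IntervalIntegrable (fun s => g s ^ 2) volume a b :=
    ((hg.pow 2).mono hI.subset).intervalIntegrable
  have hfg : IntervalIntegrable (fun s => f s * g s) volume a b :=
    ((hf.mul hg).mono hI.subset).intervalIntegrable
  have hq : ∀ x : ℝ, 0 ≤ (∫ s in a..b, g s ^ 2) * (x * x)
      + (2 * ∫ s in a..b, f s * g s) * x + ∫ s in a..b, f s ^ 2 := by
    intro x
    have h0 : 0 ≤ ∫ s in a..b, (x * g s + f s) ^ 2 :=
      intervalIntegral.integral_nonneg hab fun s _ => sq_nonneg _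
    have hexp : (fun s => (x * g s + f s) ^ 2)
        = fun s => x ^ 2 * g s ^ 2 + 2 * x * (f s * g s) + f s ^ 2 := by
      funext s; ring
    rw [hexp] at h0
    rw [intervalIntegral.integral_add ((hg2.const_mul _).add (hfg.const_mul _)) hf2,
      intervalIntegral.integral_add (hg2.const_mul _) (hfg.const_mul _),
      intervalIntegral.integral_const_mul, intervalIntegral.integral_const_mul] at h0
    nlinarith [h0]
  have hd := discrim_le_zero hq
  rw [discrim] at hd
  nlinarith [hd]

/-- FTC for vector-valued functions with one-sided derivatives on a closed interval. -/
lemma ftc_vec {V : Type*} [NormedAddCommGroup V] [NormedSpace ℝ V] [CompleteSpace V]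
    {a b : ℝ} (hab : a ≤ b) {g g' : ℝ → V}
    (h : ∀ t ∈ Icc a b, HasDerivWithinAt g (g' t) (Icc a b) t)
    (hc : ContinuousOn g' (Icc a b)) :
    ∫ s in a..b, g' s = g b - g a := by
  refine intervalIntegral.integral_eq_sub_of_hasDerivAt_of_le hab
    (fun t ht => (h t ht).continuousWithinAt) (fun x hx => ?_) ?_
  · exact (h x (Ioo_subset_Icc_self hx)).hasDerivAt (Icc_mem_nhds hx.1 hx.2)
  · exact (hc.mono (uIcc_of_le hab).subset).intervalIntegrable

/-- The squared Peano kernel integral. -/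
lemma kernel_sq_integral (a b : ℝ) :
    ∫ s in a..b, ((s - a) * (b - s)) ^ 2 = (b - a) ^ 5 / 30 := by
  have h : ∀ s : ℝ, HasDerivAt
      (fun s => (b - a) ^ 2 / 3 * (s - a) ^ 3 - (b - a) / 2 * (s - a) ^ 4 + 1 / 5 * (s - a) ^ 5)
      (((s - a) * (b - s)) ^ 2) s := by
    intro s
    have h1 : HasDerivAt (fun s : ℝ => s - a) 1 s := (hasDerivAt_id s).sub_const a
    have := (((h1.pow 3).const_mul ((b - a) ^ 2 / 3)).sub
      ((h1.pow 4).const_mul ((b - a) / 2))).add ((h1.pow 5).const_mul (1 / 5))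
    refine this.congr_deriv ?_
    push_cast
    ring
  rw [intervalIntegral.integral_eq_sub_of_hasDerivAt (fun s _ => h s)
    ((Continuous.intervalIntegrable (by continuity) a b))]
  ring

/-- Trapezoid rule error via the Peano kernel, scalar version. -/
lemma trapezoid_error {a b : ℝ} (hab : a ≤ b) {f f' f'' f''' : ℝ → ℝ}
    (h1 : ∀ t ∈ Icc a b, HasDerivWithinAt f (f' t) (Icc a b) t)
    (h2 : ∀ t ∈ Icc a b, HasDerivWithinAt f' (f'' t) (Icc a b) t)
    (h3 : ∀ t ∈ Icc a b, HasDerivWithinAt f'' (f''' t) (Icc a b) t)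
    (h4 : ContinuousOn f''' (Icc a b)) :
    f b - f a - ((b - a) / 2) * (f' a + f' b)
      = -(1 / 2) * ∫ s in a..b, (s - a) * (b - s) * f''' s := by
  have hI : uIcc a b = Icc a b := uIcc_of_le hab
  have hk : ∀ s : ℝ, HasDerivAt (fun s => (s - a) * (b - s)) (a + b - 2 * s) s := by
    intro s
    have := ((hasDerivAt_id s).sub_const a).mul ((hasDerivAt_const s b).sub (hasDerivAt_id s))
    simp only [id] at this
    refine this.congr_deriv ?_; simp only [Pi.sub_apply, id]; ring
  have hk' : ∀ s : ℝ, HasDerivAt (fun s => a + b - 2 * s) (-2) s := by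
    intro s
    exact ((hasDerivAt_const s (a + b)).sub ((hasDerivAt_id s).const_mul 2)).congr_deriv (by simp)
  have hf'''int : IntervalIntegrable f''' volume a b :=
    (h4.mono hI.subset).intervalIntegrable
  have hcf'' : ContinuousOn f'' (Icc a b) := fun t ht => (h3 t ht).continuousWithinAt
  have hcf' : ContinuousOn f' (Icc a b) := fun t ht => (h2 t ht).continuousWithinAt
  have hf''int : IntervalIntegrable f'' volume a b := (hcf''.mono hI.subset).intervalIntegrable
  have hf'int : IntervalIntegrable f' volume a b := (hcf'.mono hI.subset).intervalIntegrable
  -- first integration by parts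
  have ibp1 : (∫ s in a..b, (s - a) * (b - s) * f''' s)
      = (b - a) * (b - b) * f'' b - (a - a) * (b - a) * f'' a
        - ∫ s in a..b, (a + b - 2 * s) * f'' s := by
    refine intervalIntegral.integral_mul_deriv_eq_deriv_mul_of_hasDerivWithinAt
      (fun x _ => (hk x).hasDerivWithinAt) (fun x hx => hI ▸ h3 x (hI ▸ hx))
      ((Continuous.intervalIntegrable (by continuity) a b)) hf'''int
  -- second integration by parts
  have ibp2 : (∫ s in a..b, (a + b - 2 * s) * f'' s)
      = (a + b - 2 * b) * f' b - (a + b - 2 * a) * f' a - ∫ s in a..b, (-2) * f' s := by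
    refine intervalIntegral.integral_mul_deriv_eq_deriv_mul_of_hasDerivWithinAt
      (fun x _ => (hk' x).hasDerivWithinAt) (fun x hx => hI ▸ h2 x (hI ▸ hx))
      ((Continuous.intervalIntegrable (by continuity) a b)) hf''int
  have hftc : ∫ s in a..b, f' s = f b - f a := ftc_vec hab h1
    (fun t ht => (h2 t ht).continuousWithinAt)
  have hconst : (∫ s in a..b, (-2) * f' s) = (-2) * (f b - f a) := by
    rw [intervalIntegral.integral_const_mul, hftc]
  rw [ibp1, ibp2, hconst]
  ring

set_option maxHeartbeats 1000000 in
/-- One step of the Crank–Nicolson energy estimate. -/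
lemma step_est {V : Type*} [NormedAddCommGroup V] [InnerProductSpace ℝ V]
    (a : V →ₗ[ℝ] V →ₗ[ℝ] ℝ)
    (hsym : ∀ x y : V, a x y = a y x)
    (τ : ℝ) (hτ : 0 < τ) (A B : ℝ) (hAB : B = A + τ)
    (u u' u'' u''' ρ ρ' : ℝ → V)
    (hud : ∀ t ∈ Icc A B, HasDerivWithinAt u (u' t) (Icc A B) t)
    (hu'd : ∀ t ∈ Icc A B, HasDerivWithinAt u' (u'' t) (Icc A B) t)
    (hu''d : ∀ t ∈ Icc A B, HasDerivWithinAt u'' (u''' t) (Icc A B) t)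
    (hu'''c : ContinuousOn u''' (Icc A B))
    (hρd : ∀ t ∈ Icc A B, HasDerivWithinAt ρ (ρ' t) (Icc A B) t)
    (hρ'c : ContinuousOn ρ' (Icc A B))
    (e0 e1 : V)
    (hstep : ∀ v : V, ⟪(1 / τ) • (e1 - e0), v⟫ + a ((1 / 2 : ℝ) • (e1 + e0)) v
      = -⟪(1 / τ) • (ρ B - ρ A), v⟫
        + ⟪(1 / τ) • (u B - u A) - (1 / 2 : ℝ) • (u' B + u' A), v⟫) :
    a e1 e1 - a e0 e0 ≤ (∫ s in A..B, ‖ρ' s‖ ^ 2)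
      + (τ ^ 4 / 120) * ∫ s in A..B, ‖u''' s‖ ^ 2 := by
  have hABle : A ≤ B := by rw [hAB]; linarith
  have hBA : B - A = τ := by rw [hAB]; ring
  have hIcc : uIcc A B = Icc A B := uIcc_of_le hABle
  set d : V := e1 - e0 with hd
  set r : V := (1 / τ) • (ρ B - ρ A) with hr
  set ω : V := (1 / τ) • (u B - u A) - (1 / 2 : ℝ) • (u' B + u' A) with hω
  -- energy identity from the scheme tested with d
  have E : (1 / τ) * ‖d‖ ^ 2 + (1 / 2) * (a e1 e1 - a e0 e0) = ⟪ω - r, d⟫ := by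
    have h := hstep d
    have hL1 : ⟪(1 / τ) • d, d⟫ = (1 / τ) * ‖d‖ ^ 2 := by
      rw [real_inner_smul_left, real_inner_self_eq_norm_sq]
    have hL2 : a ((1 / 2 : ℝ) • (e1 + e0)) d = (1 / 2) * (a e1 e1 - a e0 e0) := by
      rw [hd]
      simp only [LinearMap.map_smul, LinearMap.map_add, LinearMap.map_sub,
        LinearMap.smul_apply, LinearMap.add_apply, LinearMap.sub_apply, smul_eq_mul]
      linear_combination (hsym e1 e0) / 2 + hsym e0 e1
    have hR : -⟪r, d⟫ + ⟪ω, d⟫ = ⟪ω - r, d⟫ := by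
      conv_rhs => rw [inner_sub_left]
      ring
    rw [hL1, hL2, hR] at h
    exact h
  have young : ⟪ω - r, d⟫ ≤ (1 / τ) * ‖d‖ ^ 2 + (τ / 4) * ‖ω - r‖ ^ 2 := by
    have h1 : ⟪ω - r, d⟫ ≤ ‖ω - r‖ * ‖d‖ := real_inner_le_norm _ _
    have h2 : (1 / τ) * ‖d‖ ^ 2 + (τ / 4) * ‖ω - r‖ ^ 2 - ‖ω - r‖ * ‖d‖
        = (1 / τ) * (‖d‖ - τ * ‖ω - r‖ / 2) ^ 2 := by
      field_simp
      ring
    nlinarith [mul_nonneg (by positivity : (0:ℝ) ≤ 1 / τ)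
      (sq_nonneg (‖d‖ - τ * ‖ω - r‖ / 2))]
  have step1 : a e1 e1 - a e0 e0 ≤ (τ / 2) * ‖ω - r‖ ^ 2 := by linarith
  have hwsq : ‖ω - r‖ ^ 2 ≤ 2 * ‖ω‖ ^ 2 + 2 * ‖r‖ ^ 2 := by
    nlinarith [norm_sub_le ω r, norm_nonneg (ω - r), norm_nonneg ω, norm_nonneg r,
      sq_nonneg (‖ω‖ - ‖r‖)]
  -- ρ part
  have hJρ0 : 0 ≤ ∫ s in A..B, ‖ρ' s‖ ^ 2 :=
    intervalIntegral.integral_nonneg hABle fun s _ => by positivity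
  have hρA : ∀ v : V, ⟪ρ B - ρ A, v⟫ = ∫ s in A..B, ⟪ρ' s, v⟫ := by
    intro v
    have hdv : ∀ t ∈ Icc A B,
        HasDerivWithinAt (fun s => ⟪ρ s, v⟫) ⟪ρ' t, v⟫ (Icc A B) t := by
      intro t ht
      simpa using (hρd t ht).inner (𝕜 := ℝ) (hasDerivWithinAt_const t (Icc A B) v)
    rw [ftc_vec hABle hdv (hρ'c.inner continuousOn_const)]
    rw [inner_sub_left]
  have hρnorm : ‖ρ B - ρ A‖ ≤ ∫ s in A..B, ‖ρ' s‖ := by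
    rcases eq_or_ne (ρ B - ρ A) 0 with h0 | h0
    · rw [h0]; simpa using intervalIntegral.integral_nonneg hABle fun s _ => norm_nonneg _
    · have h := hρA (ρ B - ρ A)
      rw [real_inner_self_eq_norm_sq] at h
      have int1 : IntervalIntegrable (fun s => ⟪ρ' s, ρ B - ρ A⟫) volume A B :=
        ((hρ'c.inner continuousOn_const).mono hIcc.subset).intervalIntegrable
      have int2 : IntervalIntegrable (fun s => ‖ρ' s‖ * ‖ρ B - ρ A‖) volume A B :=
        ((hρ'c.norm.mul continuousOn_const).mono hIcc.subset).intervalIntegrable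
      have hmono : (∫ s in A..B, ⟪ρ' s, ρ B - ρ A⟫)
          ≤ ∫ s in A..B, ‖ρ' s‖ * ‖ρ B - ρ A‖ :=
        intervalIntegral.integral_mono_on hABle int1 int2
          fun s _ => real_inner_le_norm _ _
      rw [intervalIntegral.integral_mul_const] at hmono
      have hpos0 : 0 < ‖ρ B - ρ A‖ := norm_pos_iff.mpr h0
      nlinarith [h, hmono]
  have hρsq : ‖ρ B - ρ A‖ ^ 2 ≤ τ * ∫ s in A..B, ‖ρ' s‖ ^ 2 := by
    have hcs := cs_integral hABle (continuousOn_const (c := (1:ℝ))) hρ'c.norm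
    simp only [one_mul, one_pow] at hcs
    rw [intervalIntegral.integral_const, smul_eq_mul, mul_one, hBA] at hcs
    have hup : ‖ρ B - ρ A‖ ^ 2 ≤ (∫ s in A..B, ‖ρ' s‖) ^ 2 :=
      pow_le_pow_left₀ (norm_nonneg _) hρnorm 2
    calc ‖ρ B - ρ A‖ ^ 2 ≤ (∫ s in A..B, ‖ρ' s‖) ^ 2 := hup
      _ ≤ τ * ∫ s in A..B, ‖ρ' s‖ ^ 2 := hcs
  have hrJ : τ * ‖r‖ ^ 2 ≤ ∫ s in A..B, ‖ρ' s‖ ^ 2 := by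
    have hrn : ‖r‖ ^ 2 = (1 / τ) ^ 2 * ‖ρ B - ρ A‖ ^ 2 := by
      rw [hr, norm_smul, mul_pow, Real.norm_eq_abs, abs_of_pos (by positivity)]
    rw [hrn]
    have h2 : τ * ((1 / τ) ^ 2 * ‖ρ B - ρ A‖ ^ 2) = ‖ρ B - ρ A‖ ^ 2 / τ := by
      field_simp
    rw [h2, div_le_iff₀ hτ]
    nlinarith [hρsq]
  -- ω part via Peano kernel
  have hJu0 : 0 ≤ ∫ s in A..B, ‖u''' s‖ ^ 2 :=
    intervalIntegral.integral_nonneg hABle fun s _ => by positivity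
  have mk : ∀ (g g' : ℝ → V), (∀ t ∈ Icc A B, HasDerivWithinAt g (g' t) (Icc A B) t) →
      ∀ t ∈ Icc A B, HasDerivWithinAt (fun s => ⟪g s, ω⟫) ⟪g' t, ω⟫ (Icc A B) t := by
    intro g g' hg t ht
    simpa using (hg t ht).inner (𝕜 := ℝ) (hasDerivWithinAt_const t (Icc A B) ω)
  have hωid : τ * ‖ω‖ ^ 2 = -(1 / 2) * ∫ s in A..B, (s - A) * (B - s) * ⟪u''' s, ω⟫ := by
    have htr := trapezoid_error hABle (mk u u' hud) (mk u' u'' hu'd) (mk u'' u''' hu''d)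
      (hu'''c.inner continuousOn_const)
    have hτω : u B - u A - ((B - A) / 2) • (u' A + u' B) = τ • ω := by
      rw [hω, hBA]
      match_scalars <;> field_simp
    have hL : ⟪u B, ω⟫ - ⟪u A, ω⟫ - ((B - A) / 2) * (⟪u' A, ω⟫ + ⟪u' B, ω⟫)
        = ⟪u B - u A - ((B - A) / 2) • (u' A + u' B), ω⟫ := by
      simp only [inner_sub_left, real_inner_smul_left, inner_add_left]
      try ring
    rw [hL, hτω, real_inner_smul_left, real_inner_self_eq_norm_sq] at htr
    exact htr
  have hkernelmono : τ * ‖ω‖ ^ 2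
      ≤ (1 / 2) * ((∫ s in A..B, (s - A) * (B - s) * ‖u''' s‖) * ‖ω‖) := by
    rw [hωid]
    have intA : IntervalIntegrable (fun s => -((s - A) * (B - s) * ⟪u''' s, ω⟫)) volume A B := by
      apply ContinuousOn.intervalIntegrable
      apply ContinuousOn.neg
      exact (((continuousOn_id.sub continuousOn_const).mul
        (continuousOn_const.sub continuousOn_id)).mul
        ((hu'''c.inner continuousOn_const).mono hIcc.subset))
    have intB : IntervalIntegrable (fun s => (s - A) * (B - s) * ‖u''' s‖ * ‖ω‖) volume A B := by
      apply ContinuousOn.intervalIntegrable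
      exact ((((continuousOn_id.sub continuousOn_const).mul
        (continuousOn_const.sub continuousOn_id)).mul
        (hu'''c.norm.mono hIcc.subset)).mul continuousOn_const)
    have hmono : -(∫ s in A..B, (s - A) * (B - s) * ⟪u''' s, ω⟫)
        ≤ ∫ s in A..B, (s - A) * (B - s) * ‖u''' s‖ * ‖ω‖ := by
      rw [← intervalIntegral.integral_neg]
      apply intervalIntegral.integral_mono_on hABle intA intB
      intro s hs
      have hk0 : 0 ≤ (s - A) * (B - s) :=
        mul_nonneg (by linarith [hs.1]) (by linarith [hs.2])
      have t1 := mul_le_mul_of_nonneg_left (neg_le_abs ⟪u''' s, ω⟫) hk0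
      have t2 := mul_le_mul_of_nonneg_left (abs_real_inner_le_norm (u''' s) ω) hk0
      nlinarith [t1, t2]
    rw [intervalIntegral.integral_mul_const] at hmono
    linarith
  have hIker0 : 0 ≤ ∫ s in A..B, (s - A) * (B - s) * ‖u''' s‖ :=
    intervalIntegral.integral_nonneg hABle fun s hs => by
      have hk0 : 0 ≤ (s - A) * (B - s) :=
        mul_nonneg (by linarith [hs.1]) (by linarith [hs.2])
      exact mul_nonneg hk0 (norm_nonneg _)
  have hIcs : (∫ s in A..B, (s - A) * (B - s) * ‖u''' s‖) ^ 2
      ≤ (τ ^ 5 / 30) * ∫ s in A..B, ‖u''' s‖ ^ 2 := by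
    have hkc : ContinuousOn (fun s => (s - A) * (B - s)) (Icc A B) :=
      (continuousOn_id.sub continuousOn_const).mul (continuousOn_const.sub continuousOn_id)
    have := cs_integral hABle hkc hu'''c.norm
    rw [kernel_sq_integral A B, hBA] at this
    exact this
  have hωsq : ‖ω‖ ^ 2 ≤ (τ ^ 3 / 120) * ∫ s in A..B, ‖u''' s‖ ^ 2 := by
    rcases eq_or_lt_of_le (norm_nonneg ω) with h0 | h0
    · rw [← h0]
      have : (0:ℝ) ^ 2 = 0 := by norm_num
      rw [this]
      exact mul_nonneg (by positivity) hJu0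
    · have h1 : τ * ‖ω‖ ≤ (∫ s in A..B, (s - A) * (B - s) * ‖u''' s‖) / 2 := by
        nlinarith [hkernelmono, h0]
      have h2 : (τ * ‖ω‖) ^ 2 ≤ ((∫ s in A..B, (s - A) * (B - s) * ‖u''' s‖) / 2) ^ 2 :=
        pow_le_pow_left₀ (by positivity) h1 2
      nlinarith [h2, hIcs, pow_pos hτ 2, sq_nonneg (‖ω‖), pow_pos hτ 3, mul_pos (pow_pos hτ 2) h0]
  -- assemble
  have hfin1 : τ * ‖ω‖ ^ 2 ≤ (τ ^ 4 / 120) * ∫ s in A..B, ‖u''' s‖ ^ 2 := by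
    have := mul_le_mul_of_nonneg_left hωsq hτ.le
    calc τ * ‖ω‖ ^ 2 ≤ τ * ((τ ^ 3 / 120) * ∫ s in A..B, ‖u''' s‖ ^ 2) := this
      _ = (τ ^ 4 / 120) * ∫ s in A..B, ‖u''' s‖ ^ 2 := by ring
  have h2 : (τ / 2) * ‖ω - r‖ ^ 2 ≤ (τ / 2) * (2 * ‖ω‖ ^ 2 + 2 * ‖r‖ ^ 2) :=
    mul_le_mul_of_nonneg_left hwsq (by positivity)
  have h3 : (τ / 2) * (2 * ‖ω‖ ^ 2 + 2 * ‖r‖ ^ 2) = τ * ‖ω‖ ^ 2 + τ * ‖r‖ ^ 2 := by ring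
  linarith [step1, h2, hrJ, hfin1]

end AuxLemmas

/-- Abstract second-order convergence of the Crank–Nicolson scheme in the energy norm:
`a(η^N, η^N) ≤ a(η⁰, η⁰) + 2 ∫₀ᵀ ‖ρ'‖² + (τ⁴/60) ∫₀ᵀ ‖u'''‖²`. -/
theorem crank_nicolson_energy_convergence
    {V : Type*} [NormedAddCommGroup V] [InnerProductSpace ℝ V]
    (a : V →ₗ[ℝ] V →ₗ[ℝ] ℝ)
    (hsym : ∀ x y : V, a x y = a y x)
    (hpos : ∀ v : V, 0 ≤ a v v)
    (τ : ℝ) (hτ : 0 < τ) (N : ℕ) (hN : 1 ≤ N) (T : ℝ) (hT : T = N * τ)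
    (u u' u'' u''' ρ ρ' : ℝ → V)
    (hu : ∀ t ∈ Icc (0 : ℝ) T, HasDerivWithinAt u (u' t) (Icc 0 T) t)
    (hu' : ∀ t ∈ Icc (0 : ℝ) T, HasDerivWithinAt u' (u'' t) (Icc 0 T) t)
    (hu'' : ∀ t ∈ Icc (0 : ℝ) T, HasDerivWithinAt u'' (u''' t) (Icc 0 T) t)
    (hu''' : ContinuousOn u''' (Icc 0 T))
    (hρ : ∀ t ∈ Icc (0 : ℝ) T, HasDerivWithinAt ρ (ρ' t) (Icc 0 T) t)
    (hρ' : ContinuousOn ρ' (Icc 0 T))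
    (η : ℕ → V)
    (hscheme : ∀ n, 1 ≤ n → n ≤ N → ∀ v : V,
      ⟪(1 / τ) • (η n - η (n - 1)), v⟫ + a ((1 / 2 : ℝ) • (η n + η (n - 1))) v
        = -⟪(1 / τ) • (ρ ((n : ℝ) * τ) - ρ (((n : ℝ) - 1) * τ)), v⟫
          + ⟪(1 / τ) • (u ((n : ℝ) * τ) - u (((n : ℝ) - 1) * τ))
              - (1 / 2 : ℝ) • (u' ((n : ℝ) * τ) + u' (((n : ℝ) - 1) * τ)), v⟫) :
    a (η N) (η N) ≤ a (η 0) (η 0) + 2 * (∫ s in (0 : ℝ)..T, ‖ρ' s‖ ^ 2)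
      + (τ ^ 4 / 60) * ∫ s in (0 : ℝ)..T, ‖u''' s‖ ^ 2 := by
  have hT0 : 0 ≤ T := by
    rw [hT]; positivity
  set p : ℕ → ℝ := fun k => (k : ℝ) * τ with hp
  have hple : ∀ k : ℕ, p (k + 1) = p k + τ := by
    intro k; simp only [hp]; push_cast; ring
  have hple' : ∀ k : ℕ, p k ≤ p (k + 1) := fun k => by rw [hple k]; linarith
  have hsub : ∀ k : ℕ, k < N → Icc (p k) (p (k + 1)) ⊆ Icc 0 T := by
    intro k hk
    apply Icc_subset_Icc
    · simp only [hp]; positivity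
    · rw [hple k, hT]
      have hk1 : (k : ℝ) + 1 ≤ (N : ℝ) := by exact_mod_cast hk
      simp only [hp]
      nlinarith
  have key : ∀ k : ℕ, k < N →
      a (η (k + 1)) (η (k + 1)) - a (η k) (η k)
        ≤ (∫ s in p k..p (k + 1), ‖ρ' s‖ ^ 2)
          + (τ ^ 4 / 120) * ∫ s in p k..p (k + 1), ‖u''' s‖ ^ 2 := by
    intro k hk
    refine step_est a hsym τ hτ (p k) (p (k + 1)) (hple k) u u' u'' u''' ρ ρ'
      (fun t ht => (hu t (hsub k hk ht)).mono (hsub k hk))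
      (fun t ht => (hu' t (hsub k hk ht)).mono (hsub k hk))
      (fun t ht => (hu'' t (hsub k hk ht)).mono (hsub k hk))
      (hu'''.mono (hsub k hk))
      (fun t ht => (hρ t (hsub k hk ht)).mono (hsub k hk))
      (hρ'.mono (hsub k hk)) (η k) (η (k + 1)) ?_
    intro v
    have h' := hscheme (k + 1) (Nat.le_add_left 1 k) hk v
    simp only [Nat.add_sub_cancel] at h'
    have e1 : ((k + 1 : ℕ) : ℝ) - 1 = (k : ℝ) := by push_cast; ring
    rw [e1] at h'
    exact h'
  have hIρ : ∀ k : ℕ, k < N → IntervalIntegrable (fun s => ‖ρ' s‖ ^ 2) volume (p k) (p (k + 1)) :=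
    fun k hk => (((hρ'.mono (hsub k hk)).norm.pow 2).mono
      (uIcc_of_le (hple' k)).subset).intervalIntegrable
  have hIu : ∀ k : ℕ, k < N → IntervalIntegrable (fun s => ‖u''' s‖ ^ 2) volume (p k) (p (k + 1)) :=
    fun k hk => (((hu'''.mono (hsub k hk)).norm.pow 2).mono
      (uIcc_of_le (hple' k)).subset).intervalIntegrable
  have tele : a (η N) (η N) - a (η 0) (η 0)
      = ∑ k ∈ Finset.range N, (a (η (k + 1)) (η (k + 1)) - a (η k) (η k)) :=
    (Finset.sum_range_sub (fun k => a (η k) (η k)) N).symm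
  have hsum : ∑ k ∈ Finset.range N, (a (η (k + 1)) (η (k + 1)) - a (η k) (η k))
      ≤ (∫ s in (0:ℝ)..T, ‖ρ' s‖ ^ 2) + (τ ^ 4 / 120) * ∫ s in (0:ℝ)..T, ‖u''' s‖ ^ 2 := by
    have hle := Finset.sum_le_sum (fun k hk => key k (Finset.mem_range.mp hk))
    have e1 : ∑ k ∈ Finset.range N, ((∫ s in p k..p (k + 1), ‖ρ' s‖ ^ 2)
          + (τ ^ 4 / 120) * ∫ s in p k..p (k + 1), ‖u''' s‖ ^ 2)
        = (∫ s in (0:ℝ)..T, ‖ρ' s‖ ^ 2) + (τ ^ 4 / 120) * ∫ s in (0:ℝ)..T, ‖u''' s‖ ^ 2 := by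
      rw [Finset.sum_add_distrib, ← Finset.mul_sum,
        intervalIntegral.sum_integral_adjacent_intervals hIρ,
        intervalIntegral.sum_integral_adjacent_intervals hIu]
      have h0 : p 0 = 0 := by simp [hp]
      have hN' : p N = T := by rw [hT]
      rw [h0, hN']
    rw [e1] at hle
    exact hle
  have hρnn : 0 ≤ ∫ s in (0:ℝ)..T, ‖ρ' s‖ ^ 2 :=
    intervalIntegral.integral_nonneg hT0 fun s _ => by positivity
  have hunn : 0 ≤ ∫ s in (0:ℝ)..T, ‖u''' s‖ ^ 2 :=
    intervalIntegral.integral_nonneg hT0 fun s _ => by positivity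
  nlinarith [tele, hsum, hρnn, hunn, hτ, pow_pos hτ 4]
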